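/- arXiv:1512.08168 — 2 statements merged into one kernel-verified Lean document; each statement's English description precedes it below -/
import Mathlib

section
/- Let w be a fixed word listing all letters of Σ, and let NS_w be the set of words not having w as a prefix. For any language L ⊆ Σ*, L = Σ* if and only if wL ∪ NS_w ⊇ P_Σ, where wL = {w·u | u ∈ L} and P_Σ is the set of pangrams. -/
theorem universality_iff_pangram_cover (A : Type) [Fintype A]
    (w : List A) (hw : ∀ a : A, a ∈ w) (L : Set (List A)) :
    L = Set.univ ↔
      {x : List A | ∀ a : A, a ∈ x} ⊆
        {x : List A | ∃ u ∈ L, x = w ++ u} ∪ {x : List A | ¬ w <+: x} := by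
  constructor
  · rintro rfl x hx
    by_cases h : w <+: x
    · obtain ⟨u, rfl⟩ := h
      exact Or.inl ⟨u, trivial, rfl⟩
    · exact Or.inr h
  · intro h
    ext u
    simp only [Set.mem_univ, iff_true]
    have hx : (w ++ u) ∈ {x : List A | ∀ a : A, a ∈ x} := fun a =>
      List.mem_append.mpr (Or.inl (hw a))
    rcases h hx with ⟨v, hv, heq⟩ | hns
    · have : u = v := by simpa using heq
      exact this ▸ hv
    · exact absurd ⟨u, rfl⟩ hns
end

section
/- Given a finite set Σ and a set C ⊆ Σ³ of betweenness constraints, define F = {acb, cab, bac, bca | (a,b,c) ∈ C} as a set of forbidden length-3 subsequences. Then there exists a strict total order < on Σ satisfying every constraint (a,b,c) ∈ C (i.e., a < b < c or c < b < a) if and only if there exists a perfect pangram over Σ containing no element of F as a subsequence. -/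
open List in
private lemma pair_sub {α : Type*} (l : List α) (j k : ℕ) (hjk : j < k)
    (hk : k < l.length) : List.Sublist [l[j]'(by omega), l[k]] l := by
  have hd : l.drop j = l[j]'(by omega) :: l.drop (j+1) :=
    List.drop_eq_getElem_cons (by omega)
  have hz : l[k] ∈ l.drop (j+1) := by
    have hlen : k - (j+1) < (l.drop (j+1)).length := by simp; omega
    have : (l.drop (j+1))[k-(j+1)] = l[k] := by
      rw [List.getElem_drop]
      congr 1
      omega
    exact this ▸ List.getElem_mem _
  calc [l[j]'(by omega), l[k]]
      <+ l[j]'(by omega) :: l.drop (j+1) := (List.singleton_sublist.mpr hz).cons₂ _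
    _ = l.drop j := hd.symm
    _ <+ l := List.drop_sublist _ _

open List in
private lemma triple_sub {α : Type*} (l : List α) (i j k : ℕ) (hij : i < j)
    (hjk : j < k) (hk : k < l.length) :
    List.Sublist [l[i]'(by omega), l[j]'(by omega), l[k]] l := by
  have hd : l.drop i = l[i]'(by omega) :: l.drop (i+1) :=
    List.drop_eq_getElem_cons (by omega)
  have hlen : k - (i+1) < (l.drop (i+1)).length := by simp; omega
  have h2 : [l[j]'(by omega), l[k]] <+ l.drop (i+1) := by
    have e1 : (l.drop (i+1))[j-(i+1)]'(by simp; omega) = l[j]'(by omega) := by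
      rw [List.getElem_drop]; congr 1; omega
    have e2 : (l.drop (i+1))[k-(i+1)]'(by simp; omega) = l[k] := by
      rw [List.getElem_drop]; congr 1; omega
    have := pair_sub (l.drop (i+1)) (j-(i+1)) (k-(i+1)) (by omega) hlen
    rwa [e1, e2] at this
  calc [l[i]'(by omega), l[j]'(by omega), l[k]]
      <+ l[i]'(by omega) :: l.drop (i+1) := h2.cons₂ _
    _ = l.drop i := hd.symm
    _ <+ l := List.drop_sublist _ _

theorem betweenness_iff_perfect_pangram (A : Type) [Fintype A] [DecidableEq A]
    (C : Set (A × A × A))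
    (hC : ∀ t ∈ C, t.1 ≠ t.2.1 ∧ t.2.1 ≠ t.2.2 ∧ t.1 ≠ t.2.2) :
    (∃ r : A → A → Prop, IsStrictTotalOrder A r ∧
        ∀ t ∈ C, (r t.1 t.2.1 ∧ r t.2.1 t.2.2) ∨ (r t.2.2 t.2.1 ∧ r t.2.1 t.1)) ↔
      ∃ w : List A, (∀ a : A, w.count a = 1) ∧
        ∀ t ∈ C,
          ¬ [t.1, t.2.2, t.2.1].Sublist w ∧
          ¬ [t.2.2, t.1, t.2.1].Sublist w ∧
          ¬ [t.2.1, t.1, t.2.2].Sublist w ∧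
          ¬ [t.2.1, t.2.2, t.1].Sublist w := by
  classical
  constructor
  · rintro ⟨r, hr, hsat⟩
    haveI := hr
    letI : LinearOrder A := linearOrderOfSTO r
    set w := Finset.univ.sort (α := A) (· ≤ ·) with hw
    have hsorted : w.Pairwise (· < ·) := (Finset.sortedLT_sort _).pairwise
    have key : ∀ x y z : A, [x,y,z].Sublist w → r x y ∧ r y z := by
      intro x y z hs
      have h := hsorted.sublist hs
      obtain ⟨h1, h2⟩ := List.pairwise_cons.mp h
      obtain ⟨h3, -⟩ := List.pairwise_cons.mp h2
      exact ⟨h1 y (by simp), h3 z (by simp)⟩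
    refine ⟨w, ?_, ?_⟩
    · intro a
      exact List.count_eq_one_of_mem (Finset.sort_nodup _ _)
        (by rw [hw]; simp [Finset.mem_sort])
    · intro t ht
      obtain h | h := hsat t ht
      · refine ⟨fun hs => ?_, fun hs => ?_, fun hs => ?_, fun hs => ?_⟩ <;>
          obtain ⟨h1, h2⟩ := key _ _ _ hs
        · exact asymm_of r h2 h.2 |>.elim
        · exact asymm_of r h1 (trans_of r h.1 h.2) |>.elim
        · exact asymm_of r h1 h.1 |>.elim
        · exact asymm_of r h2 (trans_of r h.1 h.2) |>.elim
      · refine ⟨fun hs => ?_, fun hs => ?_, fun hs => ?_, fun hs => ?_⟩ <;>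
          obtain ⟨h1, h2⟩ := key _ _ _ hs
        · exact asymm_of r h1 (trans_of r h.1 h.2) |>.elim
        · exact asymm_of r h2 h.2 |>.elim
        · exact asymm_of r h2 (trans_of r h.1 h.2) |>.elim
        · exact asymm_of r h1 h.1 |>.elim
  · rintro ⟨w, hcount, hforb⟩
    have hmem : ∀ a : A, a ∈ w := by
      intro a
      have := hcount a
      by_contra h
      rw [List.count_eq_zero_of_not_mem h] at this
      omega
    have hnd : w.Nodup := List.nodup_iff_count_le_one.mpr (fun a => (hcount a).le)
    refine ⟨fun x y => w.idxOf x < w.idxOf y,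
      { trichotomous := ?_, irrefl := fun a => Nat.lt_irrefl _,
        trans := fun a b c => Nat.lt_trans }, ?_⟩
    · intro a b
      rcases Nat.lt_trichotomy (w.idxOf a) (w.idxOf b) with h | h | h
      · exact fun h1 _ => absurd h h1
      · exact fun _ _ => (List.idxOf_inj (hmem a)).mp h
      · exact fun _ h2 => absurd h h2
    · intro t ht
      obtain ⟨a, b, c⟩ := t
      obtain ⟨hab, hbc, hac⟩ := hC _ ht
      simp only at hab hbc hac ⊢
      have hforb' := hforb _ ht
      simp only at hforb'
      have ha := List.idxOf_lt_length_iff.mpr (hmem a)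
      have hb := List.idxOf_lt_length_iff.mpr (hmem b)
      have hc := List.idxOf_lt_length_iff.mpr (hmem c)
      have ea : w[w.idxOf a] = a := List.getElem_idxOf ha
      have eb : w[w.idxOf b] = b := List.getElem_idxOf hb
      have ec : w[w.idxOf c] = c := List.getElem_idxOf hc
      have hab' : w.idxOf a ≠ w.idxOf b :=
        fun h => hab ((List.idxOf_inj (hmem a)).mp h)
      have hbc' : w.idxOf b ≠ w.idxOf c :=
        fun h => hbc ((List.idxOf_inj (hmem b)).mp h)
      have hac' : w.idxOf a ≠ w.idxOf c :=
        fun h => hac ((List.idxOf_inj (hmem a)).mp h)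
      have sub : ∀ x y z : A, w.idxOf x < w.idxOf y → w.idxOf y < w.idxOf z →
          List.Sublist [x, y, z] w := by
        intro x y z h1 h2
        have hz := List.idxOf_lt_length_iff.mpr (hmem z)
        have := triple_sub w (w.idxOf x) (w.idxOf y) (w.idxOf z) h1 h2 hz
        rwa [List.getElem_idxOf, List.getElem_idxOf, List.getElem_idxOf] at this
      by_contra hcon
      rcases Nat.lt_trichotomy (w.idxOf a) (w.idxOf b) with h1 | h1 | h1
      · rcases Nat.lt_trichotomy (w.idxOf b) (w.idxOf c) with h2 | h2 | h2
        · exact hcon (Or.inl ⟨h1, h2⟩)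
        · exact hbc' h2
        · rcases Nat.lt_trichotomy (w.idxOf a) (w.idxOf c) with h3 | h3 | h3
          · exact hforb'.1 (sub a c b h3 h2)
          · exact hac' h3
          · exact hforb'.2.1 (sub c a b h3 h1)
      · exact hab' h1
      · rcases Nat.lt_trichotomy (w.idxOf b) (w.idxOf c) with h2 | h2 | h2
        · rcases Nat.lt_trichotomy (w.idxOf a) (w.idxOf c) with h3 | h3 | h3
          · exact hforb'.2.2.1 (sub b a c h1 h3)
          · exact hac' h3
          · exact hforb'.2.2.2 (sub b c a h2 h3)
        · exact hbc' h2
        · exact hcon (Or.inr ⟨h2, h1⟩)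
end
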